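/- For a, b, p, q > 0 and n a positive integer, ∫₀^∞ (((ax+p)/(ax+q))^n - ((bx+p)/(bx+q))^n)/x dx = (1 - p^n/q^n) · ln(a/b). -/

import Mathlib

open MeasureTheory Real Set

open Filter Topology

lemma frullani_aux (a b p q : ℝ) (n : ℕ) (ha : 0 < a) (hb : 0 < b)
    (hp : 0 < p) (hq : 0 < q) (hn : 0 < n) (hba : b ≤ a) :
    ∫ x in Ioi (0:ℝ),
      (((a * x + p) / (a * x + q)) ^ n - ((b * x + p) / (b * x + q)) ^ n) / x
      = (1 - p ^ n / q ^ n) * Real.log (a / b) := by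
  set f : ℝ → ℝ := fun y => ((y + p) / (y + q)) ^ n with hf
  set g : ℝ → ℝ := fun y => (n : ℝ) * ((y + p) / (y + q)) ^ (n - 1) * ((q - p) / (y + q) ^ 2)
    with hg
  -- derivative
  have hderiv : ∀ y ∈ Ici (0:ℝ), HasDerivAt f (g y) y := by
    intro y hy
    have hyq : y + q ≠ 0 := by have : (0:ℝ) ≤ y := hy; positivity
    have h1 : HasDerivAt (fun y : ℝ => (y + p) / (y + q))
        ((1 * (y + q) - (y + p) * 1) / (y + q) ^ 2) y :=
      (((hasDerivAt_id y).add_const p).div ((hasDerivAt_id y).add_const q) hyq)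
    simp only [one_mul, mul_one] at h1
    rw [show y + q - (y + p) = q - p by ring] at h1
    exact h1.pow n
  -- tendsto
  have htend : Tendsto f atTop (𝓝 1) := by
    have h0 : Tendsto (fun y : ℝ => 1 + (p - q) / (y + q)) atTop (𝓝 (1 + 0)) :=
      tendsto_const_nhds.add (tendsto_const_nhds.div_atTop
        (tendsto_atTop_add_const_right _ q tendsto_id))
    have h1 : Tendsto (fun y : ℝ => (y + p) / (y + q)) atTop (𝓝 1) := by
      rw [show (1:ℝ) = 1 + 0 by ring]
      apply h0.congr'
      filter_upwards [eventually_gt_atTop (0:ℝ)] with y hy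
      have hyq : y + q ≠ 0 := by positivity
      field_simp
      ring
    simpa using h1.pow n
  have hf0 : f 0 = (p / q) ^ n := by simp [hf]
  -- integrability of g on Ioi 0
  have hgnn : ∀ y ∈ Ioi (0:ℝ), 0 ≤ (y + p) / (y + q) := by
    intro y hy
    have : (0:ℝ) < y := hy
    positivity
  have hint : IntegrableOn g (Ioi (0:ℝ)) := by
    rcases le_total p q with hpq | hpq
    · refine integrableOn_Ioi_deriv_of_nonneg' hderiv (fun y hy => ?_) htend
      have h1 := hgnn y hy
      have : (0:ℝ) < y := hy
      have h2 : (0:ℝ) ≤ q - p := sub_nonneg.2 hpq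
      positivity
    · refine integrableOn_Ioi_deriv_of_nonpos' hderiv (fun y hy => ?_) htend
      have h1 := hgnn y hy
      have h3 : (0:ℝ) < y := hy
      have h2 : q - p ≤ 0 := sub_nonpos.2 hpq
      have h4 : (0:ℝ) < (y + q) ^ 2 := by positivity
      have : (q - p) / (y + q) ^ 2 ≤ 0 := div_nonpos_of_nonpos_of_nonneg h2 h4.le
      have h5 : (0:ℝ) ≤ (n:ℝ) * ((y + p) / (y + q)) ^ (n-1) := by positivity
      exact mul_nonpos_of_nonneg_of_nonpos h5 this
  have hIoi : ∫ y in Ioi (0:ℝ), g y = 1 - (p / q) ^ n := by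
    rw [integral_Ioi_of_hasDerivAt_of_tendsto' hderiv hint htend, hf0]
  -- continuity of g on Ici 0
  have hcg : ContinuousOn g (Ici (0:ℝ)) := by
    have hne : ∀ y ∈ Ici (0:ℝ), y + q ≠ 0 := by
      intro y hy; have : (0:ℝ) ≤ y := hy; positivity
    have h1 : ContinuousOn (fun y : ℝ => (y + p) / (y + q)) (Ici 0) :=
      ContinuousOn.div (by fun_prop) (by fun_prop) hne
    exact (continuousOn_const.mul (h1.pow _)).mul
      (ContinuousOn.div continuousOn_const (by fun_prop)
        fun y hy => pow_ne_zero _ (hne y hy))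
  -- key pointwise identity
  have hx_eq : ∀ x ∈ Ioi (0:ℝ),
      (((a * x + p) / (a * x + q)) ^ n - ((b * x + p) / (b * x + q)) ^ n) / x
        = ∫ t in Ioc b a, g (t * x) := by
    intro x hx
    have hx0 : (0:ℝ) < x := hx
    have hmem : ∀ t ∈ uIcc b a, t * x ∈ Ici (0:ℝ) := by
      intro t ht
      rw [uIcc_of_le hba] at ht
      have h0t : 0 < t := hb.trans_le ht.1
      exact mem_Ici.2 (by positivity)
    have hd : ∀ t ∈ uIcc b a, HasDerivAt (fun t => f (t * x)) (g (t * x) * x) t := by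
      intro t ht
      have := (hderiv (t * x) (hmem t ht)).comp t (hasDerivAt_mul_const x)
      exact this
    have hcont : ContinuousOn (fun t => g (t * x) * x) (uIcc b a) :=
      ((hcg.comp (Continuous.continuousOn (by fun_prop)) hmem).mul continuousOn_const)
    have hii : IntervalIntegrable (fun t => g (t * x) * x) volume b a :=
      hcont.intervalIntegrable
    have heq := intervalIntegral.integral_eq_sub_of_hasDerivAt hd hii
    rw [intervalIntegral.integral_mul_const] at heq
    rw [← intervalIntegral.integral_of_le hba]
    have : f (a * x) = ((a * x + p) / (a * x + q)) ^ n := rfl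
    rw [div_eq_iff hx0.ne', heq]
  rw [setIntegral_congr_fun measurableSet_Ioi hx_eq]
  -- Fubini
  have hmeasg : Measurable g := by fun_prop
  have hFmeas : AEStronglyMeasurable (fun z : ℝ × ℝ => g (z.2 * z.1))
      ((volume.restrict (Ioi (0:ℝ))).prod (volume.restrict (Ioc b a))) :=
    (hmeasg.comp (measurable_snd.mul measurable_fst)).aestronglyMeasurable
  have hC : IntegrableOn (fun y => ‖g y‖) (Ioi (0:ℝ)) := hint.norm
  set C : ℝ := ∫ y in Ioi (0:ℝ), ‖g y‖ with hCdef
  have hF : Integrable (fun z : ℝ × ℝ => g (z.2 * z.1))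
      ((volume.restrict (Ioi (0:ℝ))).prod (volume.restrict (Ioc b a))) := by
    rw [integrable_prod_iff' hFmeas]
    constructor
    · filter_upwards [ae_restrict_mem measurableSet_Ioc] with t ht
      have ht0 : 0 < t := lt_of_lt_of_le hb ht.1.le
      have := (integrableOn_Ioi_comp_mul_left_iff g 0 ht0).2 (by simpa using hint)
      exact this
    · have hI : IntegrableOn (fun t : ℝ => t⁻¹ * C) (Ioc b a) := by
        refine IntegrableOn.mono_set ?_ Ioc_subset_Icc_self
        refine ContinuousOn.integrableOn_Icc ?_
        exact (continuousOn_id.inv₀ fun t ht => ne_of_gt (lt_of_lt_of_le hb ht.1)).mul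
          continuousOn_const
      refine hI.congr ?_
      filter_upwards [ae_restrict_mem measurableSet_Ioc] with t ht
      have ht0 : 0 < t := lt_of_lt_of_le hb ht.1.le
      have := integral_comp_mul_left_Ioi (fun y => ‖g y‖) 0 ht0
      rw [mul_zero] at this
      simp only [smul_eq_mul] at this
      rw [← hCdef] at this
      exact this.symm
  have hswap := integral_integral_swap (f := fun x t => g (t * x)) hF
  rw [hswap]
  have hinner : ∀ t ∈ Ioc b a,
      (∫ x in Ioi (0:ℝ), g (t * x)) = t⁻¹ * (1 - (p / q) ^ n) := by
    intro t ht
    have ht0 : 0 < t := lt_of_lt_of_le hb ht.1.le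
    have := integral_comp_mul_left_Ioi g 0 ht0
    rw [mul_zero, hIoi] at this
    simpa using this
  rw [setIntegral_congr_fun measurableSet_Ioc hinner]
  rw [integral_mul_const]
  rw [show (∫ t in Ioc b a, t⁻¹) = Real.log (a / b) by
    rw [← intervalIntegral.integral_of_le hba, integral_inv_of_pos hb ha]]
  rw [div_pow]
  ring

theorem frullani_rational_pow (a b p q : ℝ) (n : ℕ) (ha : 0 < a) (hb : 0 < b)
    (hp : 0 < p) (hq : 0 < q) (hn : 0 < n) :
    ∫ x in Ioi (0:ℝ),
      (((a * x + p) / (a * x + q)) ^ n - ((b * x + p) / (b * x + q)) ^ n) / x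
      = (1 - p ^ n / q ^ n) * Real.log (a / b) := by
  rcases le_total b a with h | h
  · exact frullani_aux a b p q n ha hb hp hq hn h
  · have H := frullani_aux b a p q n hb ha hp hq hn h
    have h1 : ∫ x in Ioi (0:ℝ),
        (((a * x + p) / (a * x + q)) ^ n - ((b * x + p) / (b * x + q)) ^ n) / x
        = - ∫ x in Ioi (0:ℝ),
        (((b * x + p) / (b * x + q)) ^ n - ((a * x + p) / (a * x + q)) ^ n) / x := by
      rw [← integral_neg]
      congr 1
      funext x
      ring
    rw [h1, H, Real.log_div ha.ne' hb.ne', Real.log_div hb.ne' ha.ne']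
    ring
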